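/- For each fixed 0 < t ≤ 1, one has Σ_{j=1}^{b_t(n)} x_{n,α}^j ∼ t·n and Σ_{j=1}^{b_t(n)} x_{n,α}^j / j ∼ t·n/α(n) as n → ∞ (i.e. the ratios converge to 1). -/

import Mathlib

open Finset Filter

noncomputable section

/-- `b_t(n) = max{α(n) + ⌊log t · α(n)/log(n/α(n))⌋, 0}` for `t > 0`. -/
def bt (α : ℕ → ℕ) (n : ℕ) (t : ℝ) : ℕ :=
  if t = 0 then 0
  else ((α n : ℤ) + ⌊Real.log t * (α n : ℝ) / Real.log ((n : ℝ) / (α n : ℝ))⌋).toNat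

set_option maxHeartbeats 4000000

lemma geom_Icc (x : ℝ) (c : ℕ) :
    (x - 1) * ∑ j ∈ Finset.Icc 1 c, x ^ j = x ^ (c + 1) - x := by
  induction c with
  | zero => simp
  | succ c ih =>
    rw [Finset.sum_Icc_succ_top (Nat.le_add_left 1 c), mul_add, ih]
    ring

lemma harm_Icc (N : ℕ) : ∑ j ∈ Finset.Icc 1 N, (1:ℝ)/j ≤ 1 + Real.log N := by
  induction N with
  | zero => simp
  | succ N ih =>
    rcases Nat.eq_zero_or_pos N with h0 | hpos
    · subst h0; simp
    rw [Finset.sum_Icc_succ_top (Nat.le_add_left 1 N)]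
    have hlog : Real.log (N / (N+1) : ℝ) ≤ (N / (N+1) : ℝ) - 1 :=
      Real.log_le_sub_one_of_pos (by positivity)
    have h1 : Real.log ((N:ℝ) / (N+1)) = Real.log N - Real.log (N+1) :=
      Real.log_div (by exact_mod_cast hpos.ne') (by positivity)
    have h2 : ((N:ℝ) / (N+1)) - 1 = -(1/(N+1)) := by field_simp; ring
    have h3 : Real.log ((N:ℝ)+1) = Real.log ((N+1:ℕ):ℝ) := by push_cast; ring_nf
    have : (1:ℝ)/((N+1:ℕ):ℝ) ≤ Real.log ((N+1:ℕ):ℝ) - Real.log N := by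
      rw [← h3]; push_cast; linarith [h1 ▸ (h2 ▸ hlog)]
    linarith


lemma aux_div1 (P aa LL s : ℝ) (ha : aa ≠ 0) (hL : LL ≠ 0) (hs : s ≠ 0) :
    (P*aa/LL + aa/s + 2)/(aa/4) = 4*P/LL + 4/s + 8/aa := by
  field_simp
  ring

lemma aux_div2 (z MM : ℝ) (h : MM ≠ 0) : (MM + z)/MM = 1 + z/MM := by
  field_simp

lemma aux_div3 (xa e aa t x u : ℝ) (ha : aa ≠ 0) (ht : t ≠ 0) (hx : x ≠ 0)
    (hxa : xa ≠ 0) (hu : u ≠ 0) :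
    ((xa*e*(4/aa)*(2*x/u))*aa)/(t*(x*xa/(2*u))) = 16/t*e := by
  field_simp
  ring

lemma pointwise (t : ℝ) (ht : 0 < t) (ht1 : t ≤ 1)
    (n a b : ℕ) (x : ℝ) (hx1 : 1 < x)
    (hsum : (n:ℝ) = ∑ j ∈ Finset.Icc 1 a, x ^ j)
    (hbdef : b = ((a:ℤ) + ⌊Real.log t * (a:ℝ) / Real.log ((n:ℝ)/(a:ℝ))⌋).toNat)
    (hL : 64 + 16*|Real.log t| ≤ Real.log ((n:ℝ)/(a:ℝ)))
    (hEL : 4 * Real.log (3*Real.log n) ≤ Real.log ((n:ℝ)/(a:ℝ)))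
    (hE1 : 1 ≤ Real.log (3*Real.log n))
    (hlogn : 1 ≤ Real.log n)
    (hloga : 4*Real.log n ≤ (a:ℝ))
    (ha64 : 64 ≤ a)
    (h2a : 2*(a:ℝ) ≤ (n:ℝ)) :
    ((∑ j ∈ Finset.Icc 1 b, x ^ j) / (t*(n:ℝ)) ≤ 1) ∧
    (Real.exp (-(|Real.log t| * Real.log (3*Real.log n) / Real.log ((n:ℝ)/(a:ℝ))
        + (Real.log ((n:ℝ)/(a:ℝ)) + Real.log (3*Real.log n)) / a))
      - 2/(t*((n:ℝ)/(a:ℝ) - 1)) ≤ (∑ j ∈ Finset.Icc 1 b, x ^ j) / (t*(n:ℝ))) ∧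
    ((∑ j ∈ Finset.Icc 1 b, x ^ j) / (t*(n:ℝ))
      ≤ (∑ j ∈ Finset.Icc 1 b, x ^ j / (j:ℝ)) * (a:ℝ) / (t*(n:ℝ))) ∧
    ((∑ j ∈ Finset.Icc 1 b, x ^ j / (j:ℝ)) * (a:ℝ) / (t*(n:ℝ))
      ≤ 1 + 4*|Real.log t| / Real.log ((n:ℝ)/(a:ℝ))
        + 4 / Real.sqrt (Real.log ((n:ℝ)/(a:ℝ))) + 8/(a:ℝ)
        + (16/t) * Real.exp (-Real.sqrt (Real.log ((n:ℝ)/(a:ℝ))))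
        + Real.exp 3 * (1 + Real.log a) * (a:ℝ) / (t*(n:ℝ))) := by
  -- notation
  set L := Real.log ((n:ℝ)/(a:ℝ)) with hLdef
  set E := Real.log (3*Real.log n) with hEdef
  have ha0 : 0 < a := by omega
  have ha0R : (0:ℝ) < a := by exact_mod_cast ha0
  have ha64R : (64:ℝ) ≤ a := by exact_mod_cast ha64
  have hn0R : (0:ℝ) < n := by linarith
  have hx0 : 0 < x := by linarith
  have hxm0 : 0 < x - 1 := by linarith
  have habs : 0 ≤ |Real.log t| := abs_nonneg _
  have hL64 : (64:ℝ) ≤ L := by linarith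
  have hL0 : 0 < L := by linarith
  have hE0 : 0 < E := by linarith
  -- x^a between n/a and n
  have hxa_le : x ^ a ≤ (n:ℝ) := by
    rw [hsum]
    refine Finset.single_le_sum (f := fun j => x ^ j) (fun j _ => by positivity) ?_
    simp [Finset.mem_Icc]; omega
  have hn_le : (n:ℝ) ≤ (a:ℝ) * x ^ a := by
    calc (n:ℝ) = ∑ j ∈ Finset.Icc 1 a, x ^ j := hsum
    _ ≤ ∑ _j ∈ Finset.Icc 1 a, x ^ a := by
        refine Finset.sum_le_sum fun j hj => ?_
        exact pow_le_pow_right₀ hx1.le (Finset.mem_Icc.mp hj).2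
    _ = (a:ℝ) * x ^ a := by
        rw [Finset.sum_const, Nat.card_Icc]; simp [nsmul_eq_mul]
  have hxa_ge : (n:ℝ)/(a:ℝ) ≤ x ^ a := by
    rw [div_le_iff₀ ha0R]; linarith [hn_le]
  have hna2 : (2:ℝ) ≤ (n:ℝ)/(a:ℝ) := by rw [le_div_iff₀ ha0R]; linarith
  have hxa2 : (2:ℝ) ≤ x ^ a := le_trans hna2 hxa_ge
  -- log bounds
  have hlogx0 : 0 < Real.log x := Real.log_pos hx1
  have halogx_ge : L ≤ (a:ℝ) * Real.log x := by
    have := Real.log_le_log (by positivity) hxa_ge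
    rwa [Real.log_pow] at this
  have halogx_le_n : (a:ℝ) * Real.log x ≤ Real.log n := by
    have := Real.log_le_log (by positivity) hxa_le
    rwa [Real.log_pow] at this
  have hlogx_le_n : Real.log x ≤ Real.log n / a := by
    rw [le_div_iff₀ ha0R]; linarith
  have hlogxL : L / (a:ℝ) ≤ Real.log x := by rw [div_le_iff₀ ha0R]; linarith
  -- x - 1 small
  have hu4 : Real.log n / (a:ℝ) ≤ 1/4 := by rw [div_le_iff₀ ha0R]; linarith
  have hu0 : 0 < Real.log n / (a:ℝ) := by positivity
  have hxsub : x - 1 ≤ 2 * (Real.log n / a) := by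
    set u := Real.log n / (a:ℝ) with hudef
    have hxe : x ≤ Real.exp u := by
      calc x = Real.exp (Real.log x) := (Real.exp_log hx0).symm
      _ ≤ Real.exp u := Real.exp_le_exp.mpr (by rw [hudef]; exact hlogx_le_n)
    have h1u : 1 - u ≤ Real.exp (-u) := by
      have := Real.add_one_le_exp (-u); linarith
    have hprod : Real.exp u * (1 - u) ≤ 1 := by
      calc Real.exp u * (1 - u) ≤ Real.exp u * Real.exp (-u) :=
            mul_le_mul_of_nonneg_left h1u (Real.exp_pos u).le
      _ = 1 := by rw [← Real.exp_add]; simp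
    nlinarith [Real.exp_pos u, hxe, hu4, hu0]
  have hxhalf : x - 1 ≤ 1/2 := by linarith [hu4]
  have hx2 : x ≤ 2 := by linarith
  -- identity
  have hid : (x - 1) * (n:ℝ) = x ^ (a+1) - x := by rw [hsum]; exact geom_Icc x a
  -- upper bound on a log x
  have halogx_le : (a:ℝ) * Real.log x ≤ L + E := by
    have hXa : x ^ a ≤ (n:ℝ)/(a:ℝ) * (3 * Real.log n) := by
      have h1 : x ^ (a+1) = (x-1) * n + x := by linarith [hid]
      have h2 : x ^ a ≤ x ^ (a+1) := pow_le_pow_right₀ hx1.le (by omega)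
      have h3 : (x-1) * n ≤ 2 * (Real.log n / a) * n := by
        apply mul_le_mul_of_nonneg_right hxsub hn0R.le
      have h4 : (2:ℝ) ≤ (n:ℝ)/(a:ℝ) * Real.log n := by
        calc (2:ℝ) = 2 * 1 := by ring
        _ ≤ ((n:ℝ)/(a:ℝ)) * Real.log n :=
          mul_le_mul hna2 hlogn (by norm_num) (by positivity)
      have h5 : 2 * (Real.log n / a) * n = 2 * ((n:ℝ)/(a:ℝ) * Real.log n) := by
        field_simp
      have h6 : (n:ℝ)/(a:ℝ) * (3 * Real.log n) = 3 * ((n:ℝ)/(a:ℝ) * Real.log n) := by ring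
      linarith
    have := Real.log_le_log (by positivity) hXa
    rw [Real.log_pow, Real.log_mul (by positivity) (by positivity)] at this
    rw [hLdef, hEdef]; linarith
  -- the floor and b, k
  have hlt0 : Real.log t ≤ 0 := Real.log_nonpos ht.le ht1
  have habs_eq : |Real.log t| = -Real.log t := abs_of_nonpos hlt0
  set y := Real.log t * (a:ℝ) / L with hydef
  have hy0 : y ≤ 0 := by
    apply div_nonpos_of_nonpos_of_nonneg _ hL0.le
    exact mul_nonpos_of_nonpos_of_nonneg hlt0 ha0R.le
  have hyabs : -y = |Real.log t| * (a:ℝ) / L := by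
    rw [habs_eq, hydef]; ring
  have hy_ge : -y ≤ (a:ℝ)/16 := by
    rw [hyabs]
    rw [div_le_div_iff₀ hL0 (by norm_num : (0:ℝ) < 16)]
    calc |Real.log t| * (a:ℝ) * 16 = (16 * |Real.log t|) * a := by ring
    _ ≤ L * a := by
      apply mul_le_mul_of_nonneg_right _ ha0R.le
      linarith
    _ = (a:ℝ) * L := by ring
  set m := ⌊y⌋ with hmdef
  have hm0 : m ≤ 0 := Int.floor_nonpos hy0
  have hm_le : (m:ℝ) ≤ y := Int.floor_le y
  have hm_gt : y - 1 < (m:ℝ) := by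
    have := Int.lt_floor_add_one y; linarith
  have hab_posR : (0:ℝ) ≤ (a:ℝ) + (m:ℝ) := by linarith
  have hab_pos : (0:ℤ) ≤ (a:ℤ) + m := by exact_mod_cast (by push_cast; linarith : (0:ℝ) ≤ (((a:ℤ) + m : ℤ):ℝ))
  have hbZ : (b:ℤ) = (a:ℤ) + m := by rw [hbdef]; exact Int.toNat_of_nonneg hab_pos
  have hbR : (b:ℝ) = (a:ℝ) + (m:ℝ) := by exact_mod_cast congrArg (fun z : ℤ => (z:ℝ)) hbZ
  have hb_geR : (a:ℝ)/2 ≤ (b:ℝ) := by rw [hbR]; linarith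
  have hb_le : b ≤ a := by
    have : (b:ℤ) ≤ (a:ℤ) := by rw [hbZ]; omega
    exact_mod_cast this
  have hb1 : 1 ≤ b := by
    by_contra h
    push_neg at h
    interval_cases b
    simp at hbR
    linarith
  set k := a - b with hkdef
  have hk : b + k = a := by omega
  have hkR : (k:ℝ) = (a:ℝ) - (b:ℝ) := by
    have : (k:ℕ) = a - b := hkdef
    push_cast [hkdef, Nat.cast_sub hb_le]
    ring
  have hk_ge : |Real.log t| * (a:ℝ) / L ≤ (k:ℝ) := by rw [hkR, hbR, ← hyabs]; linarith
  have hk_le : (k:ℝ) ≤ |Real.log t| * (a:ℝ) / L + 1 := by rw [hkR, hbR, ← hyabs]; linarith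
  have hk0 : (0:ℝ) ≤ (k:ℝ) := Nat.cast_nonneg k
  -- k log x bounds
  have hklogx_ge : |Real.log t| ≤ (k:ℝ) * Real.log x := by
    have h1 : |Real.log t| * (a:ℝ) / L * (L / a) ≤ (k:ℝ) * Real.log x :=
      mul_le_mul hk_ge hlogxL (by positivity) hk0
    have h2 : |Real.log t| * (a:ℝ) / L * (L / a) = |Real.log t| := by
      field_simp
    linarith
  set d := |Real.log t| * E / L + (L + E) / a with hddef
  have hd0 : 0 ≤ d := by positivity
  have hklogx_le : (k:ℝ) * Real.log x ≤ |Real.log t| + d := by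
    have hlx : Real.log x ≤ (L + E)/a := by rw [le_div_iff₀ ha0R]; linarith
    have h1 : (k:ℝ) * Real.log x ≤ (|Real.log t| * (a:ℝ) / L + 1) * ((L + E)/a) :=
      mul_le_mul hk_le hlx hlogx0.le (by positivity)
    have h2 : (|Real.log t| * (a:ℝ) / L + 1) * ((L + E)/a)
        = |Real.log t| + (|Real.log t| * E / L + (L + E) / a) := by
      field_simp
      ring
    rw [hddef]; linarith
  -- x^k bounds
  have hxk_eq : x ^ k = Real.exp ((k:ℝ) * Real.log x) := by
    rw [← Real.log_pow, Real.exp_log (pow_pos hx0 k)]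
  have hxk_ge : 1/t ≤ x ^ k := by
    rw [hxk_eq]
    calc 1/t = Real.exp (-Real.log t) := by
          rw [Real.exp_neg, Real.exp_log ht]; ring
    _ ≤ Real.exp ((k:ℝ) * Real.log x) := by
          apply Real.exp_le_exp.mpr; rw [← habs_eq]; exact hklogx_ge
  have hxk_le : x ^ k ≤ Real.exp d / t := by
    rw [hxk_eq]
    calc Real.exp ((k:ℝ) * Real.log x) ≤ Real.exp (|Real.log t| + d) :=
          Real.exp_le_exp.mpr hklogx_le
    _ = Real.exp d / t := by
          rw [habs_eq, Real.exp_add, Real.exp_neg, Real.exp_log ht]; ring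
  have hxk0 : 0 < x ^ k := pow_pos hx0 k
  have hxb0 : 0 < x ^ b := pow_pos hx0 b
  have hxa_split : x ^ a = x ^ b * x ^ k := by rw [← pow_add, hk]
  -- sums over Icc 1 b
  set S := ∑ j ∈ Finset.Icc 1 b, x ^ j with hSdef
  set T := ∑ j ∈ Finset.Icc 1 b, x ^ j / (j:ℝ) with hTdef
  have hidb : (x - 1) * S = x ^ (b+1) - x := geom_Icc x b
  have hS_pos : 0 < S := by
    rw [hSdef]
    apply Finset.sum_pos (fun j _ => pow_pos hx0 j)
    exact ⟨1, Finset.mem_Icc.mpr ⟨le_refl 1, hb1⟩⟩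
  have htn0 : 0 < t * (n:ℝ) := by positivity
  -- C1
  have hxb_le : x ^ b ≤ t * x ^ a := by
    have h1 : x ^ b * (1/t) ≤ x ^ b * x ^ k := mul_le_mul_of_nonneg_left hxk_ge hxb0.le
    rw [← hxa_split] at h1
    calc x ^ b = (x ^ b * (1/t)) * t := by field_simp
    _ ≤ x ^ a * t := mul_le_mul_of_nonneg_right h1 ht.le
    _ = t * x ^ a := by ring
  have hSle : S ≤ t * (n:ℝ) := by
    have key1 : x ^ (b+1) - x ≤ t * (x ^ (a+1) - x) := by
      have e1 : x ^ (b+1) = x * x ^ b := by ring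
      have h1 : x * x ^ b ≤ x * (t * x ^ a) := mul_le_mul_of_nonneg_left hxb_le hx0.le
      have e2 : x * (t * x ^ a) = t * x ^ (a+1) := by ring
      have h2 : t * x ≤ x := by
        calc t * x ≤ 1 * x := mul_le_mul_of_nonneg_right ht1 hx0.le
        _ = x := one_mul x
      have e3 : t * (x ^ (a+1) - x) = t * x ^ (a+1) - t * x := by ring
      linarith
    have h3 : (x - 1) * S ≤ (x - 1) * (t * n) := by
      rw [hidb]
      calc x ^ (b+1) - x ≤ t * (x ^ (a+1) - x) := key1
      _ = t * ((x - 1) * n) := by rw [hid]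
      _ = (x - 1) * (t * n) := by ring
    exact le_of_mul_le_mul_left h3 hxm0
  have C1 : S / (t * (n:ℝ)) ≤ 1 := by
    rw [div_le_one htn0]; exact hSle
  -- C2
  have hxb_ge : t * Real.exp (-d) * x ^ a ≤ x ^ b := by
    have h1 : x ^ a ≤ x ^ b * (Real.exp d / t) := by
      rw [hxa_split]; exact mul_le_mul_of_nonneg_left hxk_le hxb0.le
    have h2 : t * Real.exp (-d) * x ^ a ≤ t * Real.exp (-d) * (x ^ b * (Real.exp d / t)) :=
      mul_le_mul_of_nonneg_left h1 (by positivity)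
    calc t * Real.exp (-d) * x ^ a ≤ t * Real.exp (-d) * (x ^ b * (Real.exp d / t)) := h2
    _ = x ^ b * (Real.exp (-d) * Real.exp d) := by field_simp
    _ = x ^ b := by rw [← Real.exp_add]; simp
  have hSge : t * Real.exp (-d) * n - x/(x-1) ≤ S := by
    set q := t * Real.exp (-d) with hqdef
    have hq0 : 0 ≤ q := by positivity
    have h1 : (x-1) * S = x * x ^ b - x := by rw [hidb]; ring
    have h2 : x * (q * x ^ a) ≤ x * x ^ b :=
      mul_le_mul_of_nonneg_left hxb_ge hx0.le
    have h4 : x ^ (a+1) = (x-1) * n + x := by linarith [hid]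
    have hA : x * (q * x ^ a) = q * ((x-1)*n) + q * x := by
      calc x * (q * x ^ a) = q * x ^ (a+1) := by ring
      _ = q * ((x-1)*n) + q * x := by rw [h4]; ring
    have hqx : 0 ≤ q * x := by positivity
    have h5 : q * ((x-1)*n) - x ≤ (x-1) * S := by linarith
    have h6 : q * n - x/(x-1) ≤ S ↔
        (x-1) * (q * n - x/(x-1)) ≤ (x-1) * S :=
      (mul_le_mul_iff_right₀ hxm0).symm
    rw [h6]
    have e2 : (x-1) * (q * n - x/(x-1)) = q * ((x-1)*n) - x := by
      field_simp
    rw [e2]; exact h5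
  have hfrac : x/(x-1) ≤ 2*(n:ℝ)/((n:ℝ)/(a:ℝ) - 1) := by
    have hden : (0:ℝ) < (n:ℝ)/(a:ℝ) - 1 := by linarith
    rw [div_le_div_iff₀ hxm0 hden]
    have h1 : (n:ℝ)/(a:ℝ) - 1 ≤ (x-1) * n := by
      have : (n:ℝ)/(a:ℝ) - 1 ≤ x ^ a - 1 := by linarith
      have h2 : x ^ a - 1 ≤ x * (x ^ a - 1) :=
        le_mul_of_one_le_left (by linarith) hx1.le
      have h3 : x * (x ^ a - 1) = x ^ (a+1) - x := by ring
      linarith [hid]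
    calc x * ((n:ℝ)/(a:ℝ) - 1) ≤ 2 * ((n:ℝ)/(a:ℝ) - 1) :=
          mul_le_mul_of_nonneg_right hx2 hden.le
    _ ≤ 2 * ((x-1) * n) := by
          apply mul_le_mul_of_nonneg_left h1 (by norm_num)
    _ = 2 * n * (x - 1) := by ring
  have C2 : Real.exp (-d) - 2/(t*((n:ℝ)/(a:ℝ) - 1)) ≤ S / (t * (n:ℝ)) := by
    rw [le_div_iff₀ htn0]
    have hden : (0:ℝ) < (n:ℝ)/(a:ℝ) - 1 := by linarith
    have e1 : 2/(t*((n:ℝ)/(a:ℝ) - 1)) * (t*(n:ℝ)) = 2*((n:ℝ)/((n:ℝ)/(a:ℝ) - 1)) := by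
      calc 2/(t*((n:ℝ)/(a:ℝ) - 1)) * (t*(n:ℝ))
          = 2*((t*(n:ℝ))/(t*((n:ℝ)/(a:ℝ) - 1))) := by ring
      _ = 2*((n:ℝ)/((n:ℝ)/(a:ℝ) - 1)) := by rw [mul_div_mul_left _ _ ht.ne']
    have e : (Real.exp (-d) - 2/(t*((n:ℝ)/(a:ℝ) - 1))) * (t * n)
        = t * Real.exp (-d) * n - 2/(t*((n:ℝ)/(a:ℝ) - 1)) * (t*(n:ℝ)) := by ring
    rw [e, e1]
    have : 2*((n:ℝ)/((n:ℝ)/(a:ℝ) - 1)) = 2*(n:ℝ)/((n:ℝ)/(a:ℝ) - 1) := by ring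
    rw [this]
    linarith [hSge, hfrac]
  -- C3
  have hC3' : S / (a:ℝ) ≤ T := by
    rw [hSdef, hTdef, Finset.sum_div]
    apply Finset.sum_le_sum
    intro j hj
    obtain ⟨hj1, hj2⟩ := Finset.mem_Icc.mp hj
    have hja : (j:ℝ) ≤ (a:ℝ) := by exact_mod_cast le_trans hj2 hb_le
    have hj0 : (0:ℝ) < j := by exact_mod_cast hj1
    exact div_le_div_of_nonneg_left (by positivity) hj0 hja
  have hT0 : 0 ≤ T := le_trans (by positivity) hC3'
  have hSTa : S ≤ T * (a:ℝ) := by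
    rw [div_le_iff₀ ha0R] at hC3'; exact hC3'
  have C3 : S / (t * (n:ℝ)) ≤ T * (a:ℝ) / (t * (n:ℝ)) :=
    (div_le_div_iff_of_pos_right htn0).mpr hSTa
  -- C4 setup
  have hlogx_sub : Real.log x ≤ x - 1 := Real.log_le_sub_one_of_pos hx0
  have hsqrtL0 : 0 < Real.sqrt L := Real.sqrt_pos.mpr hL0
  have hsqrtL : 8 ≤ Real.sqrt L := by
    have h := Real.sqrt_le_sqrt hL64
    rwa [show (64:ℝ) = 8^2 by norm_num, Real.sqrt_sq (by norm_num : (0:ℝ) ≤ 8)] at h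
  set j0 := ⌈2*(a:ℝ)/L⌉₊ with hj0def
  set dd := ⌈(a:ℝ)/Real.sqrt L⌉₊ with hdddef
  have hj0_ge : 2*(a:ℝ)/L ≤ j0 := Nat.le_ceil _
  have hj0_le : (j0:ℝ) ≤ 2*(a:ℝ)/L + 1 := (Nat.ceil_lt_add_one (by positivity)).le
  have hj0_1 : 1 ≤ j0 := Nat.one_le_ceil_iff.mpr (by positivity)
  have hdd_ge : (a:ℝ)/Real.sqrt L ≤ dd := Nat.le_ceil _
  have hdd_le : (dd:ℝ) ≤ (a:ℝ)/Real.sqrt L + 1 := (Nat.ceil_lt_add_one (by positivity)).le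
  have h8 : (a:ℝ)/Real.sqrt L ≤ (a:ℝ)/8 :=
    div_le_div_of_nonneg_left ha0R.le (by norm_num) hsqrtL
  have h32 : 2*(a:ℝ)/L ≤ (a:ℝ)/32 := by
    have h := div_le_div_of_nonneg_left (show (0:ℝ) ≤ 2*a by positivity) (by norm_num : (0:ℝ) < 64) hL64
    calc 2*(a:ℝ)/L ≤ 2*(a:ℝ)/64 := h
    _ = (a:ℝ)/32 := by ring
  have ha64' : (1:ℝ) ≤ (a:ℝ)/64 := by linarith
  have hdd_lt_b : dd < b := by
    have h1 : (dd:ℝ) < (b:ℝ) := by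
      have : (dd:ℝ) ≤ (a:ℝ)/8 + 1 := by linarith
      linarith [hb_geR]
    exact_mod_cast h1
  set M := b - dd with hMdef
  have hMR : (M:ℝ) = (b:ℝ) - (dd:ℝ) := by
    rw [hMdef, Nat.cast_sub hdd_lt_b.le]
  have hM4 : (a:ℝ)/4 ≤ (M:ℝ) := by rw [hMR]; linarith
  have hM0 : (0:ℝ) < (M:ℝ) := by linarith
  have hM0n : 0 < M := by exact_mod_cast hM0
  have hj0_lt_M : j0 < M := by
    have h1 : (j0:ℝ) < (M:ℝ) := by linarith
    exact_mod_cast h1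
  have hM_le_b : M ≤ b := Nat.sub_le _ _
  -- decomposition of T
  have hIcc : Finset.Icc 1 b = Finset.Ioc 0 b := Finset.Icc_add_one_left_eq_Ioc 0 b
  have hsplit : T = (∑ j ∈ Finset.Ioc 0 j0, x^j/(j:ℝ))
      + (∑ j ∈ Finset.Ioc j0 M, x^j/(j:ℝ)) + (∑ j ∈ Finset.Ioc M b, x^j/(j:ℝ)) := by
    rw [hTdef, hIcc, ← Finset.sum_Ioc_consecutive _ (Nat.zero_le M) hM_le_b,
      ← Finset.sum_Ioc_consecutive _ (Nat.zero_le j0) hj0_lt_M.le]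
  set A := ∑ j ∈ Finset.Ioc 0 j0, x^j/(j:ℝ) with hAdef
  set B := ∑ j ∈ Finset.Ioc j0 M, x^j/(j:ℝ) with hBdef
  set Cc := ∑ j ∈ Finset.Ioc M b, x^j/(j:ℝ) with hCcdef
  -- A bound
  have hxj0_le : x ^ j0 ≤ Real.exp 3 := by
    have hELq : E/L ≤ 1/4 := by rw [div_le_div_iff₀ hL0 (by norm_num : (0:ℝ) < 4)]; linarith
    have hlxh : Real.log x ≤ 1/2 := by linarith
    have h1 : (j0:ℝ) * Real.log x ≤ 3 := by
      have e1 : (j0:ℝ)*Real.log x ≤ (2*(a:ℝ)/L + 1)*Real.log x :=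
        mul_le_mul_of_nonneg_right hj0_le hlogx0.le
      have hlogx_le' : Real.log x ≤ (L+E)/(a:ℝ) := by rw [le_div_iff₀ ha0R]; linarith
      have e2 : (2*(a:ℝ)/L)*Real.log x ≤ (2*(a:ℝ)/L)*((L+E)/a) :=
        mul_le_mul_of_nonneg_left hlogx_le' (by positivity)
      have e3 : (2*(a:ℝ)/L)*((L+E)/a) = 2 + 2*(E/L) := by field_simp
      have e6 : (2*(a:ℝ)/L + 1)*Real.log x = (2*(a:ℝ)/L)*Real.log x + Real.log x := by ring
      linarith
    calc x ^ j0 = Real.exp ((j0:ℝ)*Real.log x) := by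
          rw [← Real.log_pow, Real.exp_log (pow_pos hx0 _)]
    _ ≤ Real.exp 3 := Real.exp_le_exp.mpr h1
  have hj0_le_a : j0 ≤ a := by
    have h1 : (j0:ℝ) ≤ (a:ℝ) := by linarith
    exact_mod_cast h1
  have hA : A ≤ Real.exp 3 * (1 + Real.log a) := by
    have h1 : ∀ j ∈ Finset.Ioc 0 j0, x^j/(j:ℝ) ≤ Real.exp 3 * (1/(j:ℝ)) := by
      intro j hj
      obtain ⟨hj1, hj2⟩ := Finset.mem_Ioc.mp hj
      have hj0R : (0:ℝ) < (j:ℝ) := by exact_mod_cast hj1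
      have hxj : x^j ≤ Real.exp 3 := le_trans (pow_le_pow_right₀ hx1.le hj2) hxj0_le
      calc x^j/(j:ℝ) ≤ Real.exp 3/(j:ℝ) := by gcongr
      _ = Real.exp 3 * (1/(j:ℝ)) := by ring
    calc A ≤ ∑ j ∈ Finset.Ioc 0 j0, Real.exp 3 * (1/(j:ℝ)) := Finset.sum_le_sum h1
    _ = Real.exp 3 * ∑ j ∈ Finset.Ioc 0 j0, (1:ℝ)/(j:ℝ) := by rw [← Finset.mul_sum]
    _ ≤ Real.exp 3 * (1 + Real.log j0) := by
        apply mul_le_mul_of_nonneg_left _ (Real.exp_pos 3).le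
        rw [show Finset.Ioc 0 j0 = Finset.Icc 1 j0 from (Finset.Icc_add_one_left_eq_Ioc 0 j0).symm]
        exact harm_Icc j0
    _ ≤ Real.exp 3 * (1 + Real.log a) := by
        apply mul_le_mul_of_nonneg_left _ (Real.exp_pos 3).le
        have : Real.log (j0:ℝ) ≤ Real.log (a:ℝ) :=
          Real.log_le_log (by exact_mod_cast hj0_1) (by exact_mod_cast hj0_le_a)
        linarith
  -- B bound
  set r := (x+1)/(2*x) with hrdef
  have hr0 : 0 < r := by positivity
  have hr1 : r < 1 := by rw [hrdef, div_lt_one (by positivity)]; linarith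
  have hterm : ∀ j ∈ Finset.Ioc j0 M, x^j/(j:ℝ) ≤ x^M/(M:ℝ) * r^(M-j) := by
    intro j hj
    obtain ⟨hj1, hj2⟩ := Finset.mem_Ioc.mp hj
    have hj0R : (0:ℝ) < (j:ℝ) := by
      have : 0 < j := by omega
      exact_mod_cast this
    have hiM : j + (M - j) = M := by omega
    have hiR : ((M-j:ℕ):ℝ) = (M:ℝ) - (j:ℝ) := by
      rw [Nat.cast_sub hj2]
    have hjx : 1/(j:ℝ) ≤ (x-1)/2 := by
      have h1 : 2/(x-1) ≤ 2*(a:ℝ)/L := by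
        rw [div_le_div_iff₀ hxm0 hL0]
        have h2 : (a:ℝ)*Real.log x ≤ (a:ℝ)*(x-1) :=
          mul_le_mul_of_nonneg_left hlogx_sub ha0R.le
        have e : 2*(a:ℝ)*(x-1) = 2*((a:ℝ)*(x-1)) := by ring
        linarith
      have hjge : (j0:ℝ) ≤ (j:ℝ) := by exact_mod_cast hj1.le
      have h2 : 2/(x-1) ≤ (j:ℝ) := by linarith
      have h3 : 2 ≤ (j:ℝ)*(x-1) := by
        rw [div_le_iff₀ hxm0] at h2; linarith
      rw [div_le_div_iff₀ hj0R (by norm_num : (0:ℝ) < 2)]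
      linarith
    have hbern : 1 + ((M-j:ℕ):ℝ)*((x-1)/2) ≤ ((x+1)/2)^(M-j) := by
      have h := one_add_mul_le_pow (show (-2:ℝ) ≤ (x-1)/2 by linarith) (M-j)
      have e : (1 + (x-1)/2) = (x+1)/2 := by ring
      rwa [e] at h
    have hMj : (M:ℝ)/(j:ℝ) ≤ ((x+1)/2)^(M-j) := by
      have h3 : (M:ℝ)/(j:ℝ) = 1 + ((M-j:ℕ):ℝ)/(j:ℝ) := by
        rw [hiR]; field_simp; ring
      have h4 : ((M-j:ℕ):ℝ)/(j:ℝ) ≤ ((M-j:ℕ):ℝ)*((x-1)/2) := by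
        calc ((M-j:ℕ):ℝ)/(j:ℝ) = ((M-j:ℕ):ℝ) * (1/(j:ℝ)) := by ring
        _ ≤ ((M-j:ℕ):ℝ)*((x-1)/2) :=
          mul_le_mul_of_nonneg_left hjx (Nat.cast_nonneg _)
      linarith
    have hkey : x^M * r^(M-j) = x^j * ((x+1)/2)^(M-j) := by
      calc x^M * r^(M-j) = x^j * (x^(M-j) * r^(M-j)) := by
            rw [show x^M = x^j * x^(M-j) from by rw [← pow_add, hiM]]; ring
      _ = x^j * ((x*r)^(M-j)) := by rw [mul_pow]
      _ = x^j * ((x+1)/2)^(M-j) := by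
            rw [show x*r = (x+1)/2 from by rw [hrdef]; field_simp]
    have h5 : x^j*((M:ℝ)/(j:ℝ)) ≤ x^j*((x+1)/2)^(M-j) :=
      mul_le_mul_of_nonneg_left hMj (pow_pos hx0 j).le
    have goal' : x^j/(j:ℝ) ≤ (x^j*((x+1)/2)^(M-j))/(M:ℝ) := by
      rw [div_le_div_iff₀ hj0R hM0]
      have e6 : (x^j*((M:ℝ)/(j:ℝ)))*(j:ℝ) = x^j*(M:ℝ) := by
        field_simp
      have h6 := mul_le_mul_of_nonneg_right h5 hj0R.le
      rw [e6] at h6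
      calc x^j*(M:ℝ) ≤ x^j*((x+1)/2)^(M-j)*(j:ℝ) := by linarith
      _ = x^j*((x+1)/2)^(M-j)*(j:ℝ) := rfl
    calc x^j/(j:ℝ) ≤ (x^j*((x+1)/2)^(M-j))/(M:ℝ) := goal'
    _ = x^M/(M:ℝ) * r^(M-j) := by rw [div_mul_eq_mul_div, hkey]
  have hB0 : 0 ≤ B := Finset.sum_nonneg (fun j _ => by positivity)
  have hBsum : B ≤ x^M/(M:ℝ) * (2*x/(x-1)) := by
    have h1r : 0 < 1 - r := by linarith
    have hgeo : ∑ i ∈ Finset.range (M+1), r^i ≤ 1/(1-r) := by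
      have hg := geom_sum_mul r (M+1)
      rw [le_div_iff₀ h1r]
      have hrp : 0 ≤ r^(M+1) := pow_nonneg hr0.le _
      linarith [hg]
    have hrefl : ∑ j ∈ Finset.range (M+1), r^(M-j) = ∑ i ∈ Finset.range (M+1), r^i := by
      have h := Finset.sum_range_reflect (fun i => r^i) (M+1)
      simp only [Nat.add_sub_cancel] at h
      exact h
    have hsub : (∑ j ∈ Finset.Ioc j0 M, r^(M-j)) ≤ ∑ j ∈ Finset.range (M+1), r^(M-j) := by
      apply Finset.sum_le_sum_of_subset_of_nonneg
      · intro j hj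
        obtain ⟨_, hj2⟩ := Finset.mem_Ioc.mp hj
        exact Finset.mem_range.mpr (by omega)
      · intro j _ _; positivity
    have hinv : 1/(1-r) = 2*x/(x-1) := by
      rw [show 1 - r = (x-1)/(2*x) from by rw [hrdef]; field_simp; ring]
      rw [one_div_div]
    calc B ≤ ∑ j ∈ Finset.Ioc j0 M, x^M/(M:ℝ) * r^(M-j) := Finset.sum_le_sum hterm
    _ = x^M/(M:ℝ) * ∑ j ∈ Finset.Ioc j0 M, r^(M-j) := by rw [← Finset.mul_sum]
    _ ≤ x^M/(M:ℝ) * (2*x/(x-1)) := by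
        apply mul_le_mul_of_nonneg_left _ (by positivity)
        rw [← hinv]
        rw [hrefl] at hsub
        exact le_trans hsub hgeo
  -- Cc bound
  have hCc : Cc ≤ S/(M:ℝ) := by
    have h1 : ∀ j ∈ Finset.Ioc M b, x^j/(j:ℝ) ≤ x^j/(M:ℝ) := by
      intro j hj
      obtain ⟨hj1, _⟩ := Finset.mem_Ioc.mp hj
      have : (M:ℝ) ≤ (j:ℝ) := by exact_mod_cast hj1.le
      exact div_le_div_of_nonneg_left (by positivity) hM0 this
    calc Cc ≤ ∑ j ∈ Finset.Ioc M b, x^j/(M:ℝ) := Finset.sum_le_sum h1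
    _ = (∑ j ∈ Finset.Ioc M b, x^j)/(M:ℝ) := by rw [Finset.sum_div]
    _ ≤ S/(M:ℝ) := by
        apply (div_le_div_iff_of_pos_right hM0).mpr
        rw [hSdef]
        apply Finset.sum_le_sum_of_subset_of_nonneg
        · intro j hj
          obtain ⟨hj1, hj2⟩ := Finset.mem_Ioc.mp hj
          exact Finset.mem_Icc.mpr ⟨by omega, hj2⟩
        · intro j _ _; positivity
  -- (ii) prerequisites
  have hxd_ge : Real.exp (Real.sqrt L) ≤ x^dd := by
    have h2 : ((a:ℝ)/Real.sqrt L)*(L/(a:ℝ)) ≤ (dd:ℝ)*Real.log x :=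
      mul_le_mul hdd_ge hlogxL (by positivity) (Nat.cast_nonneg dd)
    have e : ((a:ℝ)/Real.sqrt L)*(L/(a:ℝ)) = Real.sqrt L := by
      have e1 : ((a:ℝ)/Real.sqrt L)*(L/(a:ℝ)) = L/Real.sqrt L := by
        rw [div_mul_div_comm, mul_comm (a:ℝ) L, mul_div_mul_right _ _ ha0R.ne']
      rw [e1, Real.div_sqrt]
    have h3 : Real.sqrt L ≤ (dd:ℝ)*Real.log x := by rw [← e]; exact h2
    calc Real.exp (Real.sqrt L) ≤ Real.exp ((dd:ℝ)*Real.log x) := Real.exp_le_exp.mpr h3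
    _ = x^dd := by rw [← Real.log_pow, Real.exp_log (pow_pos hx0 _)]
  have hMa : M + (k + dd) = a := by omega
  have hxM_le : x^M * Real.exp (Real.sqrt L) ≤ x^a := by
    have hk1 : (1:ℝ) ≤ x^k := one_le_pow₀ hx1.le
    have h1 : Real.exp (Real.sqrt L) ≤ x^k * x^dd := by
      calc Real.exp (Real.sqrt L) ≤ x^dd := hxd_ge
      _ ≤ x^k * x^dd := le_mul_of_one_le_left (pow_pos hx0 dd).le hk1
    calc x^M * Real.exp (Real.sqrt L) ≤ x^M * (x^k * x^dd) :=
      mul_le_mul_of_nonneg_left h1 (pow_pos hx0 M).le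
    _ = x^a := by
        rw [show x^M*(x^k*x^dd) = x^(M+(k+dd)) from by rw [pow_add, pow_add], hMa]
  have hxM_le' : x^M ≤ x^a * Real.exp (-Real.sqrt L) := by
    rw [Real.exp_neg, ← div_eq_mul_inv, le_div_iff₀ (Real.exp_pos _)]
    exact hxM_le
  have hQ : x*x^a/(2*(x-1)) ≤ (n:ℝ) := by
    rw [div_le_iff₀ (by positivity : (0:ℝ) < 2*(x-1))]
    have e : x^(a+1) = x*x^a := by ring
    have h2x : x*2 ≤ x*x^a := mul_le_mul_of_nonneg_left hxa2 hx0.le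
    have e2 : (n:ℝ)*(2*(x-1)) = 2*((x-1)*(n:ℝ)) := by ring
    rw [e2]
    linarith [hid, h2x, e]
  have hQ0 : (0:ℝ) < x*x^a/(2*(x-1)) := by positivity
  have hBfin : B*(a:ℝ)/(t*(n:ℝ)) ≤ 16/t*Real.exp (-Real.sqrt L) := by
    have hBa : B*(a:ℝ) ≤ (x^a*Real.exp (-Real.sqrt L)*(4/(a:ℝ))*(2*x/(x-1)))*(a:ℝ) := by
      apply mul_le_mul_of_nonneg_right _ ha0R.le
      calc B ≤ x^M/(M:ℝ)*(2*x/(x-1)) := hBsum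
      _ ≤ (x^a*Real.exp (-Real.sqrt L)*(4/(a:ℝ)))*(2*x/(x-1)) := by
          apply mul_le_mul_of_nonneg_right _ (by positivity)
          calc x^M/(M:ℝ) = x^M*(1/(M:ℝ)) := by ring
          _ ≤ (x^a*Real.exp (-Real.sqrt L))*(4/(a:ℝ)) := by
              apply mul_le_mul hxM_le' ?_ (by positivity) (by positivity)
              rw [div_le_div_iff₀ hM0 ha0R]; linarith
    have hmono : B*(a:ℝ)/(t*(n:ℝ)) ≤ B*(a:ℝ)/(t*(x*x^a/(2*(x-1)))) := by
      apply div_le_div_of_nonneg_left (by positivity) (by positivity)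
      exact mul_le_mul_of_nonneg_left hQ ht.le
    have heq : ((x^a*Real.exp (-Real.sqrt L)*(4/(a:ℝ))*(2*x/(x-1)))*(a:ℝ))
        /(t*(x*x^a/(2*(x-1)))) = 16/t*Real.exp (-Real.sqrt L) :=
      aux_div3 _ _ _ _ _ _ ha0R.ne' ht.ne' hx0.ne' (pow_pos hx0 a).ne' hxm0.ne'
    calc B*(a:ℝ)/(t*(n:ℝ)) ≤ B*(a:ℝ)/(t*(x*x^a/(2*(x-1)))) := hmono
    _ ≤ ((x^a*Real.exp (-Real.sqrt L)*(4/(a:ℝ))*(2*x/(x-1)))*(a:ℝ))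
        /(t*(x*x^a/(2*(x-1)))) := (div_le_div_iff_of_pos_right (by positivity)).mpr hBa
    _ = 16/t*Real.exp (-Real.sqrt L) := heq
  -- (iii)
  have haM_cast : (a:ℝ) = (M:ℝ) + ((k:ℝ) + (dd:ℝ)) := by
    have h := hMa
    have : ((M + (k + dd) : ℕ):ℝ) = ((a:ℕ):ℝ) := by exact_mod_cast congrArg (fun z : ℕ => (z:ℝ)) h
    push_cast at this
    linarith
  have hCcfin : Cc*(a:ℝ)/(t*(n:ℝ)) ≤ 1 + (4*|Real.log t|/L + 4/Real.sqrt L + 8/(a:ℝ)) := by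
    have h1 : Cc*(a:ℝ)/(t*(n:ℝ)) ≤ (S/(M:ℝ))*(a:ℝ)/(t*(n:ℝ)) :=
      (div_le_div_iff_of_pos_right htn0).mpr (mul_le_mul_of_nonneg_right hCc ha0R.le)
    have e : (S/(M:ℝ))*(a:ℝ)/(t*(n:ℝ)) = ((a:ℝ)/(M:ℝ))*(S/(t*(n:ℝ))) := by ring
    have h2 : ((a:ℝ)/(M:ℝ))*(S/(t*(n:ℝ))) ≤ ((a:ℝ)/(M:ℝ))*1 :=
      mul_le_mul_of_nonneg_left C1 (by positivity)
    have h3 : (a:ℝ)/(M:ℝ) ≤ 1 + (4*|Real.log t|/L + 4/Real.sqrt L + 8/(a:ℝ)) := by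
      have e2 : (a:ℝ)/(M:ℝ) = 1 + ((k:ℝ)+(dd:ℝ))/(M:ℝ) := by
        rw [haM_cast]; exact aux_div2 _ _ hM0.ne'
      have h4 : ((k:ℝ)+(dd:ℝ))/(M:ℝ) ≤ ((k:ℝ)+(dd:ℝ))/((a:ℝ)/4) :=
        div_le_div_of_nonneg_left (by positivity) (by positivity) hM4
      have h5 : ((k:ℝ)+(dd:ℝ))/((a:ℝ)/4)
          ≤ ( |Real.log t| * (a:ℝ)/L + (a:ℝ)/Real.sqrt L + 2)/((a:ℝ)/4) :=
        (div_le_div_iff_of_pos_right (by positivity)).mpr (by linarith)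
      have e3 : ( |Real.log t| * (a:ℝ)/L + (a:ℝ)/Real.sqrt L + 2)/((a:ℝ)/4)
          = 4*|Real.log t|/L + 4/Real.sqrt L + 8/(a:ℝ) :=
        aux_div1 _ _ _ _ ha0R.ne' hL0.ne' hsqrtL0.ne'
      rw [e2]
      rw [e3] at h5
      linarith
    calc Cc*(a:ℝ)/(t*(n:ℝ)) ≤ (S/(M:ℝ))*(a:ℝ)/(t*(n:ℝ)) := h1
    _ = ((a:ℝ)/(M:ℝ))*(S/(t*(n:ℝ))) := e
    _ ≤ (a:ℝ)/(M:ℝ) := by linarith [h2]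
    _ ≤ _ := h3
  have hAfin : A*(a:ℝ)/(t*(n:ℝ)) ≤ Real.exp 3*(1+Real.log a)*(a:ℝ)/(t*(n:ℝ)) :=
    (div_le_div_iff_of_pos_right htn0).mpr (mul_le_mul_of_nonneg_right hA ha0R.le)
  have C4 : T*(a:ℝ)/(t*(n:ℝ)) ≤ 1 + 4*|Real.log t|/L + 4/Real.sqrt L + 8/(a:ℝ)
      + 16/t*Real.exp (-Real.sqrt L) + Real.exp 3*(1+Real.log a)*(a:ℝ)/(t*(n:ℝ)) := by
    have e : T*(a:ℝ)/(t*(n:ℝ)) = A*(a:ℝ)/(t*(n:ℝ)) + B*(a:ℝ)/(t*(n:ℝ))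
        + Cc*(a:ℝ)/(t*(n:ℝ)) := by
      rw [hsplit]; ring
    rw [e]
    linarith [hAfin, hBfin, hCcfin]
  exact ⟨C1, C2, C3, C4⟩

lemma tendsto_sqrt_atTop : Tendsto Real.sqrt atTop atTop := by
  refine tendsto_atTop_atTop.mpr fun b => ⟨(max b 0)^2, fun x hx => ?_⟩
  have h1 : max b 0 ≤ Real.sqrt x := by
    rw [show (2:ℕ) = 2 from rfl] at hx
    have := Real.sqrt_le_sqrt hx
    rwa [Real.sqrt_sq (le_max_right b 0)] at this
  exact le_trans (le_max_left b 0) h1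

lemma tendsto_log3log : Tendsto (fun y : ℝ => Real.log (3*y) / y) atTop (nhds 0) := by
  have h1 : Tendsto (fun y:ℝ => Real.log y/y) atTop (nhds 0) :=
    Real.isLittleO_log_id_atTop.tendsto_div_nhds_zero
  have h2 : Tendsto (fun y:ℝ => Real.log 3/y + Real.log y/y) atTop (nhds 0) := by
    have h3 : Tendsto (fun y:ℝ => Real.log 3/y) atTop (nhds 0) :=
      Tendsto.div_atTop tendsto_const_nhds tendsto_id
    have := h3.add h1
    simpa using this
  apply h2.congr'
  filter_upwards [eventually_gt_atTop (0:ℝ)] with y hy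
  rw [Real.log_mul (by norm_num) hy.ne', add_div]

/-- for fixed `0 < t ≤ 1`,
`Σ_{j=1}^{b_t(n)} x_{n,α}^j ∼ t·n` and `Σ_{j=1}^{b_t(n)} x_{n,α}^j/j ∼ t·n/α(n)`. -/
theorem partial_sums_asymptotics
    (a₁ a₂ : ℝ) (ha₁ : 0 < a₁) (ha₁₂ : a₁ ≤ a₂) (ha₂ : a₂ < 1)
    (α : ℕ → ℕ) (hα : ∀ n : ℕ, (n : ℝ) ^ a₁ ≤ (α n : ℝ) ∧ (α n : ℝ) ≤ (n : ℝ) ^ a₂)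
    (x : ℕ → ℝ) (hx_pos : ∀ n, 0 < x n)
    (hx_eq : ∀ n : ℕ, (n : ℝ) = ∑ j ∈ Finset.Icc 1 (α n), x n ^ j)
    (t : ℝ) (ht : 0 < t) (ht1 : t ≤ 1) :
    Tendsto
      (fun n : ℕ => (∑ j ∈ Finset.Icc 1 (bt α n t), x n ^ j) / (t * (n : ℝ)))
      atTop (nhds 1) ∧
    Tendsto
      (fun n : ℕ => (∑ j ∈ Finset.Icc 1 (bt α n t), x n ^ j / (j : ℝ)) /
        (t * (n : ℝ) / (α n : ℝ)))
      atTop (nhds 1) := by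
  have ha₂0 : 0 < 1 - a₂ := by linarith
  set L : ℕ → ℝ := fun n => Real.log ((n:ℝ)/(α n : ℝ)) with hLdef
  set E : ℕ → ℝ := fun n => Real.log (3*Real.log n) with hEdef
  -- basic tendsto facts
  have hcast : Tendsto (fun n:ℕ => (n:ℝ)) atTop atTop := tendsto_natCast_atTop_atTop
  have hrpow1 : Tendsto (fun n:ℕ => (n:ℝ)^a₁) atTop atTop :=
    (tendsto_rpow_atTop ha₁).comp hcast
  have hαR : Tendsto (fun n:ℕ => ((α n : ℕ):ℝ)) atTop atTop :=
    tendsto_atTop_mono (fun n => (hα n).1) hrpow1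
  have hlogn : Tendsto (fun n:ℕ => Real.log n) atTop atTop :=
    Real.tendsto_log_atTop.comp hcast
  have hpow12 : Tendsto (fun n:ℕ => (n:ℝ)^(1-a₂)) atTop atTop :=
    (tendsto_rpow_atTop ha₂0).comp hcast
  have hlogn_div : Tendsto (fun n:ℕ => Real.log n/(n:ℝ)^a₁) atTop (nhds 0) :=
    ((isLittleO_log_rpow_atTop ha₁).tendsto_div_nhds_zero).comp hcast
  have hloglog : Tendsto (fun n:ℕ => E n/Real.log n) atTop (nhds 0) :=
    tendsto_log3log.comp hlogn
  -- eventual basic bounds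
  have hev_pos : ∀ᶠ n:ℕ in atTop, 0 < n := eventually_gt_atTop 0
  have hev_logn : ∀ᶠ n:ℕ in atTop, 1 ≤ Real.log n := hlogn.eventually_ge_atTop 1
  have hev_64 : ∀ᶠ n:ℕ in atTop, (64:ℝ) ≤ (n:ℝ)^a₁ := hrpow1.eventually_ge_atTop 64
  have hev_E2 : ∀ᶠ n:ℕ in atTop, 4*Real.log n ≤ (n:ℝ)^a₁ := by
    filter_upwards [hlogn_div.eventually (gt_mem_nhds (by norm_num : (0:ℝ) < 1/4)),
      hev_pos] with n h1 h2
    have hp : (0:ℝ) < (n:ℝ)^a₁ := Real.rpow_pos_of_pos (by exact_mod_cast h2) a₁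
    rw [div_lt_iff₀ hp] at h1
    nlinarith
  have hev_E3 : ∀ᶠ n:ℕ in atTop, (2:ℝ) ≤ (n:ℝ)^(1-a₂) := hpow12.eventually_ge_atTop 2
  have hev_E5 : ∀ᶠ n:ℕ in atTop, 64 + 16*|Real.log t| ≤ (1-a₂)*Real.log n :=
    (hlogn.const_mul_atTop ha₂0).eventually_ge_atTop _
  have hev_E6 : ∀ᶠ n:ℕ in atTop, E n ≤ ((1-a₂)/4)*Real.log n := by
    filter_upwards [hloglog.eventually (gt_mem_nhds (by positivity : (0:ℝ) < (1-a₂)/4)),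
      hev_logn] with n h1 h2
    have hp : (0:ℝ) < Real.log n := by linarith
    rw [div_lt_iff₀ hp] at h1
    linarith
  have hlog3 : (1:ℝ) ≤ Real.log 3 := by
    rw [Real.le_log_iff_exp_le (by norm_num)]
    exact le_trans Real.exp_one_lt_d9.le (by norm_num)
  -- pointwise hypotheses eventually
  have hev_a64 : ∀ᶠ n:ℕ in atTop, 64 ≤ α n := by
    filter_upwards [hev_64] with n h1
    have := le_trans h1 (hα n).1
    exact_mod_cast this
  have hev_loga : ∀ᶠ n:ℕ in atTop, 4*Real.log n ≤ (α n:ℝ) := by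
    filter_upwards [hev_E2] with n h1
    exact le_trans h1 (hα n).1
  have hev_2a : ∀ᶠ n:ℕ in atTop, 2*(α n:ℝ) ≤ (n:ℝ) := by
    filter_upwards [hev_E3, hev_pos] with n h1 h2
    have hn0 : (0:ℝ) < n := by exact_mod_cast h2
    have h3 : 2*(α n:ℝ) ≤ 2*(n:ℝ)^a₂ := by linarith [(hα n).2]
    have h4 : 2*(n:ℝ)^a₂ ≤ (n:ℝ)^(1-a₂)*(n:ℝ)^a₂ := by
      apply mul_le_mul_of_nonneg_right h1 (Real.rpow_nonneg hn0.le a₂)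
    have h5 : (n:ℝ)^(1-a₂)*(n:ℝ)^a₂ = (n:ℝ) := by
      rw [← Real.rpow_add hn0]
      norm_num
    linarith
  have hev_Llow : ∀ᶠ n:ℕ in atTop, (1-a₂)*Real.log n ≤ L n := by
    filter_upwards [hev_pos, hev_a64] with n h1 h2
    have hn0 : (0:ℝ) < n := by exact_mod_cast h1
    have hα0 : (0:ℝ) < α n := by
      have : 0 < α n := by omega
      exact_mod_cast this
    have e : L n = Real.log n - Real.log (α n) := Real.log_div hn0.ne' hα0.ne'
    have h3 : Real.log (α n) ≤ a₂*Real.log n := by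
      calc Real.log (α n) ≤ Real.log ((n:ℝ)^a₂) := Real.log_le_log hα0 (hα n).2
      _ = a₂*Real.log n := Real.log_rpow hn0 a₂
    rw [e]; linarith [h3]
  have hev_E1 : ∀ᶠ n:ℕ in atTop, (1:ℝ) ≤ E n := by
    filter_upwards [hev_logn] with n h1
    calc (1:ℝ) ≤ Real.log 3 := hlog3
    _ ≤ E n := Real.log_le_log (by norm_num) (by linarith)
  have hev_hL : ∀ᶠ n:ℕ in atTop, 64 + 16*|Real.log t| ≤ L n := by
    filter_upwards [hev_E5, hev_Llow] with n h1 h2; linarith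
  have hev_hEL : ∀ᶠ n:ℕ in atTop, 4*E n ≤ L n := by
    filter_upwards [hev_E6, hev_Llow] with n h1 h2; linarith
  have hev_x1 : ∀ᶠ n:ℕ in atTop, 1 < x n := by
    filter_upwards [hev_2a, hev_a64] with n h2a h64
    by_contra h
    push_neg at h
    have hle : (n:ℝ) ≤ (α n:ℝ) := by
      rw [hx_eq n]
      calc ∑ j ∈ Finset.Icc 1 (α n), x n ^ j
          ≤ ∑ _j ∈ Finset.Icc 1 (α n), (1:ℝ) :=
            Finset.sum_le_sum (fun j _ => pow_le_one₀ (hx_pos n).le h)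
      _ = (α n:ℝ) := by rw [Finset.sum_const, Nat.card_Icc]; simp
    have h64R : (64:ℝ) ≤ (α n:ℝ) := by exact_mod_cast h64
    linarith
  have hbtdef : ∀ n, bt α n t
      = ((α n:ℤ) + ⌊Real.log t * (α n:ℝ) / Real.log ((n:ℝ)/(α n:ℝ))⌋).toNat := by
    intro n; rw [bt, if_neg ht.ne']
  have hev_key : ∀ᶠ n:ℕ in atTop,
      ((∑ j ∈ Finset.Icc 1 (bt α n t), x n ^ j) / (t*(n:ℝ)) ≤ 1) ∧
      (Real.exp (-( |Real.log t| * E n / L n + (L n + E n) / (α n:ℝ)))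
        - 2/(t*((n:ℝ)/(α n:ℝ) - 1))
        ≤ (∑ j ∈ Finset.Icc 1 (bt α n t), x n ^ j) / (t*(n:ℝ))) ∧
      ((∑ j ∈ Finset.Icc 1 (bt α n t), x n ^ j) / (t*(n:ℝ))
        ≤ (∑ j ∈ Finset.Icc 1 (bt α n t), x n ^ j / (j:ℝ)) * (α n:ℝ) / (t*(n:ℝ))) ∧
      ((∑ j ∈ Finset.Icc 1 (bt α n t), x n ^ j / (j:ℝ)) * (α n:ℝ) / (t*(n:ℝ))
        ≤ 1 + 4*|Real.log t| / L n + 4 / Real.sqrt (L n) + 8/(α n:ℝ)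
          + (16/t) * Real.exp (-Real.sqrt (L n))
          + Real.exp 3 * (1 + Real.log (α n:ℝ)) * (α n:ℝ) / (t*(n:ℝ))) := by
    filter_upwards [hev_x1, hev_hL, hev_hEL, hev_E1, hev_logn, hev_loga, hev_a64,
      hev_2a] with n hx1 hL hEL hE1 hlogn1 hloga ha64 h2a
    exact pointwise t ht ht1 n (α n) (bt α n t) (x n) hx1 (hx_eq n) (hbtdef n)
      hL hEL hE1 hlogn1 hloga ha64 h2a
  -- limits of the bounding sequences
  have hLinf : Tendsto (fun n => L n) atTop atTop :=
    tendsto_atTop_mono' atTop hev_Llow (hlogn.const_mul_atTop ha₂0)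
  have hsqrtLinf : Tendsto (fun n => Real.sqrt (L n)) atTop atTop :=
    tendsto_sqrt_atTop.comp hLinf
  -- delta -> 0
  have hsub1 : Tendsto (fun n => |Real.log t| * E n / L n) atTop (nhds 0) := by
    have hbig : Tendsto (fun n:ℕ => (|Real.log t|/(1-a₂)) * (E n/Real.log n))
        atTop (nhds 0) := by
      have := hloglog.const_mul (|Real.log t|/(1-a₂))
      simpa using this
    apply tendsto_of_tendsto_of_tendsto_of_le_of_le' tendsto_const_nhds hbig
    · filter_upwards [hev_E1, hev_hL] with n h1 h2
      have hL0 : (0:ℝ) < L n := by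
        have : (0:ℝ) ≤ 16*|Real.log t| := by positivity
        linarith
      exact div_nonneg (mul_nonneg (abs_nonneg _) (by linarith)) hL0.le
    · filter_upwards [hev_E1, hev_Llow, hev_logn, hev_hL] with n h1 h2 h3 h4
      have hL0 : (0:ℝ) < L n := by
        have : (0:ℝ) ≤ 16*|Real.log t| := by positivity
        linarith
      have hlogn0 : (0:ℝ) < Real.log n := by linarith
      have hE0 : (0:ℝ) ≤ E n := by linarith
      have hELn : E n / L n ≤ E n / ((1-a₂)*Real.log n) :=
        div_le_div_of_nonneg_left hE0 (by positivity) h2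
      have e : (|Real.log t|/(1-a₂)) * (E n/Real.log n)
          = |Real.log t| * (E n / ((1-a₂)*Real.log n)) := by
        field_simp
      calc |Real.log t| * E n / L n = |Real.log t| * (E n / L n) := by ring
      _ ≤ |Real.log t| * (E n / ((1-a₂)*Real.log n)) :=
        mul_le_mul_of_nonneg_left hELn (abs_nonneg _)
      _ = (|Real.log t|/(1-a₂)) * (E n/Real.log n) := e.symm
  have hsub2 : Tendsto (fun n => (L n + E n) / (α n:ℝ)) atTop (nhds 0) := by
    have hbig : Tendsto (fun n:ℕ => 2*(Real.log n/(n:ℝ)^a₁)) atTop (nhds 0) := by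
      have := hlogn_div.const_mul (2:ℝ)
      simpa using this
    apply tendsto_of_tendsto_of_tendsto_of_le_of_le' tendsto_const_nhds hbig
    · filter_upwards [hev_E1, hev_hL, hev_a64] with n h1 h2 h3
      have hL0 : (0:ℝ) < L n := by
        have : (0:ℝ) ≤ 16*|Real.log t| := by positivity
        linarith
      have hα0 : (0:ℝ) < (α n:ℝ) := by
        have : 0 < α n := by omega
        exact_mod_cast this
      positivity
    · filter_upwards [hev_E6, hev_logn, hev_a64, hev_pos] with n h1 h2 h3 h4
      have hα0 : (0:ℝ) < (α n:ℝ) := by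
        have : 0 < α n := by omega
        exact_mod_cast this
      have hn0 : (0:ℝ) < (n:ℝ) := by exact_mod_cast h4
      have hEn : E n ≤ Real.log n := by nlinarith
      have hLn : L n ≤ Real.log n := by
        have e : L n = Real.log n - Real.log (α n) := Real.log_div hn0.ne' hα0.ne'
        have : (0:ℝ) ≤ Real.log (α n) := Real.log_natCast_nonneg (α n)
        rw [e]; linarith
      have hαp : (n:ℝ)^a₁ ≤ (α n:ℝ) := (hα n).1
      have hp0 : (0:ℝ) < (n:ℝ)^a₁ := Real.rpow_pos_of_pos hn0 a₁
      calc (L n + E n) / (α n:ℝ) ≤ (2*Real.log n) / (α n:ℝ) := by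
            apply div_le_div_of_nonneg_right _ hα0.le
            linarith
      _ ≤ (2*Real.log n) / (n:ℝ)^a₁ := by
            apply div_le_div_of_nonneg_left (by linarith) hp0 hαp
      _ = 2*(Real.log n/(n:ℝ)^a₁) := by ring
  have hδ : Tendsto (fun n => |Real.log t| * E n / L n + (L n + E n) / (α n:ℝ))
      atTop (nhds 0) := by
    have := hsub1.add hsub2
    simpa using this
  have hexp1 : Tendsto
      (fun n => Real.exp (-( |Real.log t| * E n / L n + (L n + E n) / (α n:ℝ))))
      atTop (nhds 1) := by
    have hδn : Tendsto (fun n => -( |Real.log t| * E n / L n + (L n + E n) / (α n:ℝ)))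
        atTop (nhds 0) := by simpa using hδ.neg
    have h1 := (Real.continuous_exp.tendsto (0:ℝ)).comp hδn
    simpa [Real.exp_zero, Function.comp_def] using h1
  have hratio : Tendsto (fun n:ℕ => (n:ℝ)/(α n:ℝ)) atTop atTop := by
    apply tendsto_atTop_mono' atTop _ hpow12
    filter_upwards [hev_pos, hev_a64] with n h1 h2
    have hn0 : (0:ℝ) < (n:ℝ) := by exact_mod_cast h1
    have hα0 : (0:ℝ) < (α n:ℝ) := by
      have : 0 < α n := by omega
      exact_mod_cast this
    have e : (n:ℝ)^(1-a₂) = (n:ℝ)/(n:ℝ)^a₂ := by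
      rw [Real.rpow_sub hn0, Real.rpow_one]
    rw [e]
    exact div_le_div_of_nonneg_left hn0.le hα0 (hα n).2
  have herr : Tendsto (fun n:ℕ => 2/(t*((n:ℝ)/(α n:ℝ) - 1))) atTop (nhds 0) := by
    apply Tendsto.div_atTop tendsto_const_nhds
    apply Tendsto.const_mul_atTop ht
    have h1 := tendsto_atTop_add_const_right atTop (-1:ℝ) hratio
    apply h1.congr
    intro n; ring
  have hlow1 : Tendsto
      (fun n => Real.exp (-( |Real.log t| * E n / L n + (L n + E n) / (α n:ℝ)))
        - 2/(t*((n:ℝ)/(α n:ℝ) - 1))) atTop (nhds 1) := by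
    have := hexp1.sub herr
    simpa using this
  have part1 : Tendsto
      (fun n : ℕ => (∑ j ∈ Finset.Icc 1 (bt α n t), x n ^ j) / (t * (n : ℝ)))
      atTop (nhds 1) := by
    apply tendsto_of_tendsto_of_tendsto_of_le_of_le' hlow1 tendsto_const_nhds
    · exact hev_key.mono fun n h => h.2.1
    · exact hev_key.mono fun n h => h.1
  refine ⟨part1, ?_⟩
  -- part 2
  have u1 : Tendsto (fun n => 4*|Real.log t| / L n) atTop (nhds 0) :=
    Tendsto.div_atTop tendsto_const_nhds hLinf
  have u2 : Tendsto (fun n => 4 / Real.sqrt (L n)) atTop (nhds 0) :=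
    Tendsto.div_atTop tendsto_const_nhds hsqrtLinf
  have u3 : Tendsto (fun n => 8 / (α n:ℝ)) atTop (nhds 0) :=
    Tendsto.div_atTop tendsto_const_nhds hαR
  have u4 : Tendsto (fun n => (16/t) * Real.exp (-Real.sqrt (L n))) atTop (nhds 0) := by
    have hexpneg : Tendsto (fun n => Real.exp (-Real.sqrt (L n))) atTop (nhds 0) :=
      Real.tendsto_exp_atBot.comp (tendsto_neg_atTop_atBot.comp hsqrtLinf)
    have := hexpneg.const_mul (16/t)
    simpa using this
  have u5 : Tendsto
      (fun n:ℕ => Real.exp 3 * (1 + Real.log (α n:ℝ)) * (α n:ℝ) / (t*(n:ℝ)))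
      atTop (nhds 0) := by
    have h1' : Tendsto (fun y:ℝ => (1+Real.log y)/y^(1-a₂)) atTop (nhds 0) := by
      have ha : Tendsto (fun y:ℝ => 1/y^(1-a₂)) atTop (nhds 0) :=
        Tendsto.div_atTop tendsto_const_nhds (tendsto_rpow_atTop ha₂0)
      have hb : Tendsto (fun y:ℝ => Real.log y/y^(1-a₂)) atTop (nhds 0) :=
        (isLittleO_log_rpow_atTop ha₂0).tendsto_div_nhds_zero
      have := ha.add hb
      simp only [add_zero] at this
      apply this.congr
      intro y
      rw [← add_div]
    have h1 : Tendsto (fun n:ℕ => (1+Real.log n)/(n:ℝ)^(1-a₂)) atTop (nhds 0) :=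
      h1'.comp hcast
    have h2 : Tendsto (fun n:ℕ => (Real.exp 3/t)*((1+Real.log n)/(n:ℝ)^(1-a₂)))
        atTop (nhds 0) := by
      have := h1.const_mul (Real.exp 3/t)
      simpa using this
    apply tendsto_of_tendsto_of_tendsto_of_le_of_le' tendsto_const_nhds h2
    · filter_upwards [hev_a64, hev_pos] with n h1' h2'
      have hα0 : (0:ℝ) < (α n:ℝ) := by
        have : 0 < α n := by omega
        exact_mod_cast this
      have : (0:ℝ) ≤ Real.log (α n:ℝ) := Real.log_natCast_nonneg (α n)
      positivity
    · filter_upwards [hev_a64, hev_pos, hev_2a] with n h1' h2' h3'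
      have hn0 : (0:ℝ) < (n:ℝ) := by exact_mod_cast h2'
      have hα0 : (0:ℝ) < (α n:ℝ) := by
        have : 0 < α n := by omega
        exact_mod_cast this
      have hαn : (α n:ℝ) ≤ (n:ℝ) := by linarith
      have hlogα : Real.log (α n:ℝ) ≤ Real.log (n:ℝ) := Real.log_le_log hα0 hαn
      have hlogα0 : (0:ℝ) ≤ Real.log (α n:ℝ) := Real.log_natCast_nonneg (α n)
      have hnum : Real.exp 3 * (1 + Real.log (α n:ℝ)) * (α n:ℝ)
          ≤ Real.exp 3 * (1 + Real.log (n:ℝ)) * (n:ℝ)^a₂ := by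
        apply mul_le_mul _ (hα n).2 hα0.le (by positivity)
        apply mul_le_mul_of_nonneg_left _ (Real.exp_pos 3).le
        linarith
      have hstep : Real.exp 3 * (1 + Real.log (α n:ℝ)) * (α n:ℝ) / (t*(n:ℝ))
          ≤ Real.exp 3 * (1 + Real.log (n:ℝ)) * (n:ℝ)^a₂ / (t*(n:ℝ)) :=
        div_le_div_of_nonneg_right hnum (by positivity)
      have hmul : (n:ℝ)^(1-a₂) * (n:ℝ)^a₂ = (n:ℝ) := by
        rw [← Real.rpow_add hn0]
        norm_num
      have hpow : (n:ℝ)^a₂/(n:ℝ) = ((n:ℝ)^(1-a₂))⁻¹ := by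
        calc (n:ℝ)^a₂/(n:ℝ) = (n:ℝ)^a₂/((n:ℝ)^(1-a₂)*(n:ℝ)^a₂) := by rw [hmul]
        _ = ((n:ℝ)^(1-a₂))⁻¹ := by
            rw [div_mul_eq_div_div_swap,
              div_self (ne_of_gt (Real.rpow_pos_of_pos hn0 a₂)), one_div]
      have heq : Real.exp 3 * (1 + Real.log (n:ℝ)) * (n:ℝ)^a₂ / (t*(n:ℝ))
          = (Real.exp 3/t)*((1+Real.log (n:ℝ))/(n:ℝ)^(1-a₂)) := by
        have e1 : Real.exp 3 * (1 + Real.log (n:ℝ)) * (n:ℝ)^a₂ / (t*(n:ℝ))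
            = (Real.exp 3/t)*((1+Real.log (n:ℝ))*((n:ℝ)^a₂/(n:ℝ))) := by
          ring
        rw [e1, hpow]
        ring
      rw [← heq]
      exact hstep
  have hU : Tendsto (fun n:ℕ => 1 + 4*|Real.log t| / L n + 4 / Real.sqrt (L n)
      + 8/(α n:ℝ) + (16/t) * Real.exp (-Real.sqrt (L n))
      + Real.exp 3 * (1 + Real.log (α n:ℝ)) * (α n:ℝ) / (t*(n:ℝ))) atTop (nhds 1) := by
    have hc1 : Tendsto (fun _:ℕ => (1:ℝ)) atTop (nhds 1) := tendsto_const_nhds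
    have := ((((hc1.add u1).add u2).add u3).add u4).add u5
    simpa using this
  have part2' : Tendsto
      (fun n : ℕ => (∑ j ∈ Finset.Icc 1 (bt α n t), x n ^ j / (j:ℝ)) * (α n:ℝ)
        / (t*(n:ℝ))) atTop (nhds 1) := by
    apply tendsto_of_tendsto_of_tendsto_of_le_of_le' hlow1 hU
    · exact hev_key.mono fun n h => le_trans h.2.1 h.2.2.1
    · exact hev_key.mono fun n h => h.2.2.2
  apply part2'.congr
  intro n
  rw [div_div_eq_mul_div]
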